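/- arXiv:1109.1806 — 2 statements merged into one kernel-verified Lean document; each statement's English description precedes it below -/
import Mathlib

section
/- Let M = {(a,0) : a ≥ 1} ∪ {(0,a) : a ≥ 1} ∪ {(b,c) : 1 ≤ b ≤ c} (all rook, bishop and spider steps). Work in the polynomial ring ℚ[ρ], and for n ≥ 0 let p^w_n = Σ_π ρ^{k(π)}, where the sum is over all Catalan M-paths π from (0,0) to (n,n) and k(π) is the number of steps of π. Let P^w(t) = Σ_{n≥0} p^w_n tⁿ ∈ (ℚ[ρ])⟦t⟧. Then P^w satisfies the quadratic equation (1+ρ)t·((2ρ+1)t − ρ − 1)·(P^w)² − ((2ρ+1)t² − ρt − 1)·P^w + (t − 1) = 0 in (ℚ[ρ])⟦t⟧. -/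
/-- x-coordinate of the `j`-th node of the path `p` (partial sum of first coordinates). -/
def xPart (p : List (ℕ × ℕ)) (j : ℕ) : ℕ := ((p.take j).map Prod.fst).sum

/-- y-coordinate of the `j`-th node of the path `p` (partial sum of second coordinates). -/
def yPart (p : List (ℕ × ℕ)) (j : ℕ) : ℕ := ((p.take j).map Prod.snd).sum

/-- `p` is an `S`-path from `(0,0)` to `(n,m)`. -/
def IsPath (S : Set (ℕ × ℕ)) (n m : ℕ) (p : List (ℕ × ℕ)) : Prop :=
  (∀ st ∈ p, st ∈ S) ∧ xPart p p.length = n ∧ yPart p p.length = m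

/-- `p` is Catalan: every node `(x, y)` satisfies `x ≤ y`. -/
def IsCatalan (p : List (ℕ × ℕ)) : Prop :=
  ∀ j ≤ p.length, xPart p j ≤ yPart p j

/-- The number of `S`-paths from `(0,0)` to `(n,m)`. -/
noncomputable def aCount (S : Set (ℕ × ℕ)) (n m : ℕ) : ℕ :=
  Set.ncard {p : List (ℕ × ℕ) | IsPath S n m p}

/-- The number of Catalan `S`-paths from `(0,0)` to `(n,n)`. -/
noncomputable def pCatalan (S : Set (ℕ × ℕ)) (n : ℕ) : ℕ :=
  Set.ncard {p : List (ℕ × ℕ) | IsPath S n n p ∧ IsCatalan p}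

/-- The set of all rook, bishop and spider steps. -/
def MSteps : Set (ℕ × ℕ) :=
  {st | (∃ a : ℕ, 1 ≤ a ∧ st = (a, 0)) ∨ (∃ a : ℕ, 1 ≤ a ∧ st = (0, a)) ∨
        (∃ b c : ℕ, 1 ≤ b ∧ b ≤ c ∧ st = (b, c))}

/-- Enumerator of Catalan `M`-paths to `(n,n)` by number of steps:
`Σ_π ρ^{k(π)}` in `ℚ[ρ]`. -/
noncomputable def pMW (n : ℕ) : Polynomial ℚ :=
  ∑ᶠ p ∈ {p : List (ℕ × ℕ) | IsPath MSteps n n p ∧ IsCatalan p},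
    (Polynomial.X : Polynomial ℚ) ^ p.length

/-- The variable `ρ` (weight of a step), as a constant power series. -/
noncomputable def ρM : PowerSeries (Polynomial ℚ) :=
  PowerSeries.C (Polynomial.X : Polynomial ℚ)

namespace Stmt18
open Finset

lemma mem_msteps_iff (s : ℕ × ℕ) :
    s ∈ MSteps ↔ (1 ≤ s.1 ∧ s.2 = 0) ∨ (s.1 = 0 ∧ 1 ≤ s.2) ∨ (1 ≤ s.1 ∧ s.1 ≤ s.2) := by
  simp only [MSteps, Set.mem_setOf_eq]
  constructor
  · rintro (⟨a, ha, rfl⟩ | ⟨a, ha, rfl⟩ | ⟨b, c, hb, hbc, rfl⟩) <;> simp_all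
  · obtain ⟨x, y⟩ := s
    rintro (⟨h1, h2⟩ | ⟨h1, h2⟩ | ⟨h1, h2⟩)
    · exact Or.inl ⟨x, h1, by simp_all⟩
    · exact Or.inr (Or.inl ⟨y, h2, by simp_all⟩)
    · exact Or.inr (Or.inr ⟨x, y, h1, h2, rfl⟩)

instance : DecidablePred (· ∈ MSteps) :=
  fun s => decidable_of_iff _ (mem_msteps_iff s).symm

def PathsSet (n m : ℕ) : Set (List (ℕ × ℕ)) :=
  {p | IsPath MSteps n m p ∧ IsCatalan p}

lemma xPart_length (p : List (ℕ × ℕ)) : xPart p p.length = (p.map Prod.fst).sum := by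
  rw [xPart, List.take_length]
lemma yPart_length (p : List (ℕ × ℕ)) : yPart p p.length = (p.map Prod.snd).sum := by
  rw [yPart, List.take_length]
lemma xPart_append (q : List (ℕ × ℕ)) (s : ℕ × ℕ) {j : ℕ} (hj : j ≤ q.length) :
    xPart (q ++ [s]) j = xPart q j := by
  rw [xPart, xPart, List.take_append_of_le_length hj]
lemma yPart_append (q : List (ℕ × ℕ)) (s : ℕ × ℕ) {j : ℕ} (hj : j ≤ q.length) :
    yPart (q ++ [s]) j = yPart q j := by
  rw [yPart, yPart, List.take_append_of_le_length hj]
lemma xPart_append_last (q : List (ℕ × ℕ)) (s : ℕ × ℕ) :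
    xPart (q ++ [s]) (q ++ [s]).length = xPart q q.length + s.1 := by
  rw [xPart_length, xPart_length]; simp
lemma yPart_append_last (q : List (ℕ × ℕ)) (s : ℕ × ℕ) :
    yPart (q ++ [s]) (q ++ [s]).length = yPart q q.length + s.2 := by
  rw [yPart_length, yPart_length]; simp

/-- the step set at stage (n,m) -/
def stepsF (n m : ℕ) : Finset (ℕ × ℕ) :=
  ((Icc 1 n).image fun a => (a, 0)) ∪ ((Icc 1 m).image fun b => ((0 : ℕ), b)) ∪
    (((Icc 1 n) ×ˢ (Icc 1 m)).filter fun s => s.1 ≤ s.2)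

lemma mem_stepsF {n m : ℕ} {s : ℕ × ℕ} :
    s ∈ stepsF n m ↔ s ∈ MSteps ∧ s.1 ≤ n ∧ s.2 ≤ m := by
  obtain ⟨x, y⟩ := s
  simp only [stepsF, mem_union, mem_image, mem_filter, mem_product, mem_Icc, Prod.mk.injEq,
    mem_msteps_iff]
  constructor
  · rintro ((⟨a, ha, rfl, rfl⟩ | ⟨b, hb, rfl, rfl⟩) | ⟨⟨hx, hy⟩, hxy⟩) <;> simp_all <;> omega
  · rintro ⟨(⟨h1, h2⟩ | ⟨h1, h2⟩ | ⟨h1, h2⟩), hx, hy⟩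
    · exact Or.inl (Or.inl ⟨x, by omega, rfl, h2.symm⟩)
    · exact Or.inl (Or.inr ⟨y, by omega, h1.symm, rfl⟩)
    · exact Or.inr ⟨⟨by omega, by omega⟩, h2⟩

lemma paths_nil : ([] : List (ℕ × ℕ)) ∈ PathsSet 0 0 := by
  constructor
  · exact ⟨by simp, by simp [xPart], by simp [yPart]⟩
  · intro j hj; simp at hj; simp [hj, xPart, yPart]

lemma paths_zero : PathsSet 0 0 = {[]} := by
  ext p
  simp only [Set.mem_singleton_iff]
  constructor
  · rintro ⟨⟨hmem, hx, hy⟩, _⟩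
    rw [xPart_length] at hx; rw [yPart_length] at hy
    rw [List.eq_nil_iff_forall_not_mem]
    intro st hst
    have h1 : st.1 = 0 := by
      have := List.single_le_sum (l := p.map Prod.fst) (by simp) st.1 (by
        exact List.mem_map_of_mem hst)
      omega
    have h2 : st.2 = 0 := by
      have := List.single_le_sum (l := p.map Prod.snd) (by simp) st.2 (by
        exact List.mem_map_of_mem hst)
      omega
    have := (mem_msteps_iff st).1 (hmem st hst)
    omega
  · rintro rfl; exact paths_nil

lemma paths_empty_of_lt {n m : ℕ} (h : m < n) : PathsSet n m = ∅ := by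
  ext p
  simp only [Set.mem_empty_iff_false, iff_false]
  rintro ⟨⟨hmem, hx, hy⟩, hc⟩
  have := hc p.length le_rfl
  omega

lemma paths_decomp {n m : ℕ} (hnm : n ≤ m) (hpos : 1 ≤ n + m) :
    PathsSet n m = ⋃ s ∈ (stepsF n m : Set (ℕ × ℕ)),
      (fun q => q ++ [s]) '' PathsSet (n - s.1) (m - s.2) := by
  ext p
  simp only [Set.mem_iUnion, Set.mem_image, Finset.mem_coe, exists_prop]
  constructor
  · rintro ⟨⟨hmem, hx, hy⟩, hc⟩
    rcases List.eq_nil_or_concat' p with rfl | ⟨q, s, rfl⟩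
    · simp [xPart, yPart] at hx hy; omega
    · have hs : s ∈ MSteps := hmem s (by simp)
      have hxq : xPart q q.length + s.1 = n := by rw [← xPart_append_last]; exact hx
      have hyq : yPart q q.length + s.2 = m := by rw [← yPart_append_last]; exact hy
      refine ⟨s, mem_stepsF.2 ⟨hs, by omega, by omega⟩, q, ⟨⟨?_, by omega, by omega⟩, ?_⟩, rfl⟩
      · exact fun st hst => hmem st (by simp [hst])
      · intro j hj
        have h1 := xPart_append q s hj
        have h2 := yPart_append q s hj
        have := hc j (by simp; omega)
        omega
  · rintro ⟨s, hsmem, q, ⟨⟨hmem, hx, hy⟩, hc⟩, rfl⟩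
    obtain ⟨hs, hs1, hs2⟩ := mem_stepsF.1 hsmem
    have hxl := xPart_append_last q s
    have hyl := yPart_append_last q s
    refine ⟨⟨?_, by omega, by omega⟩, ?_⟩
    · intro st hst
      rcases List.mem_append.1 hst with h | h
      · exact hmem st h
      · simp at h; subst h; exact hs
    · intro j hj
      rcases Nat.lt_or_ge j (q.length + 1) with h | h
      · have hj' : j ≤ q.length := by omega
        rw [xPart_append q s hj', yPart_append q s hj']
        exact hc j hj'
      · have hj' : j = (q ++ [s]).length := by simp at hj ⊢; omega
        rw [hj', hxl, hyl]; omega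

lemma paths_finite_aux : ∀ N n m, n + m = N → (PathsSet n m).Finite := by
  intro N
  induction N using Nat.strong_induction_on with
  | _ N ih =>
  intro n m hN
  rcases Nat.lt_or_ge m n with h | hnm
  · rw [paths_empty_of_lt h]; exact Set.finite_empty
  rcases Nat.eq_zero_or_pos (n + m) with h0 | hpos
  · have : n = 0 ∧ m = 0 := by omega
    rw [this.1, this.2, paths_zero]; exact Set.finite_singleton _
  rw [paths_decomp hnm hpos]
  apply Set.Finite.biUnion (Finset.finite_toSet _)
  intro s hs
  obtain ⟨hsM, hs1, hs2⟩ := mem_stepsF.1 (Finset.mem_coe.1 hs)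
  have hpos' : 1 ≤ s.1 + s.2 := by
    have := (mem_msteps_iff s).1 hsM; omega
  exact Set.Finite.image _ (ih ((n - s.1) + (m - s.2)) (by omega) _ _ rfl)

lemma paths_finite (n m : ℕ) : (PathsSet n m).Finite := paths_finite_aux _ n m rfl

noncomputable def W (n m : ℕ) : Polynomial ℚ :=
  ∑ᶠ p ∈ PathsSet n m, (Polynomial.X : Polynomial ℚ) ^ p.length

lemma W_zero : W 0 0 = 1 := by
  rw [W, paths_zero, finsum_mem_singleton]; simp

lemma W_of_lt {n m : ℕ} (h : m < n) : W n m = 0 := by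
  rw [W, paths_empty_of_lt h, finsum_mem_empty]

lemma W_eq_finset_sum (n m : ℕ) :
    W n m = ∑ p ∈ (paths_finite n m).toFinset, (Polynomial.X : Polynomial ℚ) ^ p.length := by
  rw [W, ← finsum_mem_coe_finset, Set.Finite.coe_toFinset]

lemma W_rec {n m : ℕ} (hnm : n ≤ m) (hpos : 1 ≤ n + m) :
    W n m = ∑ s ∈ stepsF n m, Polynomial.X * W (n - s.1) (m - s.2) := by
  rw [W, paths_decomp hnm hpos, finsum_mem_biUnion ?hdisj (Finset.finite_toSet _)
    (fun s _ => Set.Finite.image _ (paths_finite _ _))]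
  case hdisj =>
    intro s1 _ s2 _ hne
    apply Set.disjoint_left.2
    rintro p ⟨q1, _, rfl⟩ ⟨q2, _, heq⟩
    apply hne
    have := congrArg List.getLast? heq
    rw [List.getLast?_append_of_ne_nil q2 (by simp),
      List.getLast?_append_of_ne_nil q1 (by simp)] at this
    simpa using this.symm
  rw [finsum_mem_coe_finset]
  apply Finset.sum_congr rfl
  intro s _
  rw [finsum_mem_image (fun q1 _ q2 _ h => List.append_left_injective [s] h)]
  have : ∀ q : List (ℕ × ℕ), (Polynomial.X : Polynomial ℚ) ^ (q ++ [s]).length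
      = Polynomial.X * Polynomial.X ^ q.length := by
    intro q; rw [List.length_append, pow_add]; simp [mul_comm]
  simp only [this]
  rw [← Set.Finite.coe_toFinset (paths_finite (n - s.1) (m - s.2)), finsum_mem_coe_finset,
    ← Finset.mul_sum, ← W_eq_finset_sum]

lemma W_rec3 {n m : ℕ} (hnm : n ≤ m) (hpos : 1 ≤ n + m) :
    W n m = (∑ a ∈ Icc 1 n, Polynomial.X * W (n - a) m)
      + (∑ b ∈ Icc 1 m, Polynomial.X * W n (m - b))
      + ∑ a ∈ Icc 1 n, ∑ b ∈ Icc a m, Polynomial.X * W (n - a) (m - b) := by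
  rw [W_rec hnm hpos, stepsF]
  rw [Finset.sum_union ?d1, Finset.sum_union ?d2]
  case d2 =>
    simp only [Finset.disjoint_left, mem_image, mem_Icc]
    rintro s ⟨a, ha, rfl⟩ ⟨b, hb, hs⟩
    have := congrArg Prod.fst hs
    have := congrArg Prod.snd hs
    simp at *; omega
  case d1 =>
    simp only [Finset.disjoint_left, mem_union, mem_image, mem_filter, mem_product, mem_Icc]
    rintro s (⟨a, ha, rfl⟩ | ⟨b, hb, rfl⟩) ⟨⟨h1, h2⟩, h3⟩ <;> simp at * <;> omega
  congr 1
  · congr 1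
    · rw [Finset.sum_image (by intro a _ b _ h; simpa using h)]; simp
    · rw [Finset.sum_image (by intro a _ b _ h; simpa using h)]; simp
  · rw [Finset.sum_filter, Finset.sum_product]
    apply Finset.sum_congr rfl
    intro a ha
    rw [← Finset.sum_filter]
    congr 1
    ext b
    simp only [mem_filter, mem_Icc] at *
    omega

-- ## Power series layer
open PowerSeries

abbrev PS := PowerSeries (Polynomial ℚ)

noncomputable def Rv : PS := PowerSeries.C (Polynomial.X : Polynomial ℚ)

noncomputable def Fs (d : ℕ) : PS := PowerSeries.mk fun n => W n (n + d)
noncomputable def Ts (d : ℕ) : PS := PowerSeries.mk fun n => ∑ a ∈ Icc 1 n, W (n - a) (n + d)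
noncomputable def Ss (d : ℕ) : PS := ∑ e ∈ range (d + 1), Fs e
noncomputable def Pv (Y : PS) : PS :=
  PowerSeries.mk fun n => ∑ j ∈ range (n + 1), PowerSeries.coeff j Y

lemma coeff_X_mul (Y : PS) (n : ℕ) :
    PowerSeries.coeff n (PowerSeries.X * Y)
      = if n = 0 then 0 else PowerSeries.coeff (n - 1) Y := by
  cases n with
  | zero => simp [PowerSeries.coeff_zero_eq_constantCoeff]
  | succ n => rw [PowerSeries.coeff_succ_X_mul]; simp

lemma L_P (Y : PS) : (1 - PowerSeries.X) * Pv Y = Y := by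
  refine PowerSeries.ext fun n => ?_
  rw [sub_mul, one_mul, map_sub, coeff_X_mul]
  cases n with
  | zero => simp [Pv]
  | succ n =>
    simp only [Pv, PowerSeries.coeff_mk, Nat.succ_sub_one, Nat.succ_ne_zero, if_false]
    rw [Finset.sum_range_succ]
    ring

-- generic reindex helpers
lemma sum_shiftdown {M : Type*} [AddCommMonoid M] (f : ℕ → M) (n : ℕ) :
    ∑ a ∈ Icc 2 (n + 1), f a = ∑ a ∈ Icc 1 n, f (a + 1) := by
  refine Finset.sum_nbij' (fun a => a - 1) (fun a => a + 1) ?_ ?_ ?_ ?_ ?_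
  · intro b hb; simp only [mem_Icc] at *; omega
  · intro b hb; simp only [mem_Icc] at *; omega
  · intro b hb; simp only [mem_Icc] at hb; omega
  · intro b hb; simp only [mem_Icc] at hb; omega
  · intro b hb; simp only [mem_Icc] at hb; congr 1; omega

lemma sum_reflect' {M : Type*} [AddCommMonoid M] (f : ℕ → M) (a d : ℕ) (ha : 1 ≤ a) :
    ∑ b ∈ Icc a (a + d), f (a + d - b) = ∑ e ∈ range (d + 1), f e := by
  refine Finset.sum_nbij' (fun b => a + d - b) (fun e => a + d - e) ?_ ?_ ?_ ?_ ?_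
  · intro b hb; simp only [mem_Icc, mem_range] at *; omega
  · intro b hb; simp only [mem_Icc, mem_range] at *; omega
  · intro b hb; simp only [mem_Icc] at hb; omega
  · intro b hb; simp only [mem_range] at hb; omega
  · intro b hb; rfl

lemma sum_W_vert (n d : ℕ) :
    ∑ b ∈ Icc 1 (n + d), W n (n + d - b) = ∑ e ∈ range d, W n (n + e) := by
  rw [← Finset.sum_subset (Finset.Icc_subset_Icc_right (by omega) : Icc 1 d ⊆ Icc 1 (n + d))
    (by
      intro b hb hb'
      simp only [mem_Icc] at hb hb'
      exact W_of_lt (by omega))]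
  rcases Nat.eq_zero_or_pos d with rfl | hd
  · simp
  have h0 : Icc 1 d = Icc 1 (1 + (d - 1)) := by congr 1; omega
  have h1 : ∀ b ∈ Icc 1 (1 + (d - 1)), W n (n + d - b) = W n (n + (1 + (d - 1) - b)) := by
    intro b hb; simp only [mem_Icc] at hb; congr 1; omega
  rw [h0, Finset.sum_congr rfl h1, sum_reflect' (fun e => W n (n + e)) 1 (d - 1) le_rfl,
    show d - 1 + 1 = d by omega]

lemma sum_W_spid (n d a : ℕ) (ha : 1 ≤ a) (han : a ≤ n) :
    ∑ b ∈ Icc a (n + d), W (n - a) (n + d - b) = ∑ e ∈ range (d + 1), W (n - a) (n - a + e) := by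
  rw [← Finset.sum_subset (Finset.Icc_subset_Icc_right (by omega) : Icc a (a + d) ⊆ Icc a (n + d))
    (by
      intro b hb hb'
      simp only [mem_Icc] at hb hb'
      exact W_of_lt (by omega))]
  have h1 : ∀ b ∈ Icc a (a + d), W (n - a) (n + d - b) = W (n - a) (a + d - b + (n - a)) := by
    intro b hb; simp only [mem_Icc] at hb; congr 1; omega
  rw [Finset.sum_congr rfl h1, sum_reflect' (fun e => W (n - a) (e + (n - a))) a d ha]
  apply Finset.sum_congr rfl
  intro e _; congr 1; omega

lemma sum_Icc_sub {M : Type*} [AddCommMonoid M] (f : ℕ → M) (n : ℕ) :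
    ∑ a ∈ Icc 1 n, f (n - a) = ∑ j ∈ range n, f j := by
  refine Finset.sum_nbij' (fun a => n - a) (fun j => n - j) ?_ ?_ ?_ ?_ ?_
  · intro b hb; simp only [mem_Icc, mem_range] at *; omega
  · intro b hb; simp only [mem_Icc, mem_range] at *; omega
  · intro b hb; simp only [mem_Icc] at hb; omega
  · intro b hb; simp only [mem_range] at hb; omega
  · intro b hb; rfl

lemma L_T (d : ℕ) : Ts d = PowerSeries.X * Fs (d + 1) + PowerSeries.X * Ts (d + 1) := by
  refine PowerSeries.ext fun n => ?_
  rw [map_add, coeff_X_mul, coeff_X_mul]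
  cases n with
  | zero => simp [Ts]
  | succ n =>
    simp only [Ts, Fs, PowerSeries.coeff_mk, Nat.succ_sub_one, Nat.succ_ne_zero, if_false]
    have e1 : Icc 1 (n + 1) = insert 1 (Icc 2 (n + 1)) := by
      ext x; simp only [mem_Icc, mem_insert]; omega
    rw [e1, Finset.sum_insert (by simp [mem_Icc]),
      sum_shiftdown (fun a => W (n + 1 - a) (n + 1 + d)) n]
    congr 1
    · congr 1 <;> omega
    · apply Finset.sum_congr rfl
      intro a ha
      simp only [mem_Icc] at ha
      congr 1 <;> omega

lemma coeff_Ss (d j : ℕ) :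
    PowerSeries.coeff j (Ss d) = ∑ e ∈ range (d + 1), W j (j + e) := by
  rw [Ss, map_sum]
  apply Finset.sum_congr rfl
  intro e _
  rw [Fs, PowerSeries.coeff_mk]

lemma L_master (d : ℕ) :
    Fs d = (if d = 0 then 1 else 0) + Rv * Ts d + Rv * (∑ e ∈ range d, Fs e)
      + Rv * (PowerSeries.X * Pv (Ss d)) := by
  refine PowerSeries.ext fun n => ?_
  simp only [map_add, Rv, PowerSeries.coeff_C_mul, coeff_X_mul]
  have hcoef1 : (PowerSeries.coeff n) (if d = 0 then (1 : PS) else 0)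
      = if d = 0 ∧ n = 0 then 1 else 0 := by
    split <;> simp_all [PowerSeries.coeff_one]
  rw [hcoef1]
  have hsum : (PowerSeries.coeff n) (∑ e ∈ range d, Fs e)
      = ∑ e ∈ range d, W n (n + e) := by
    rw [map_sum]
    exact Finset.sum_congr rfl fun e _ => by rw [Fs, PowerSeries.coeff_mk]
  rw [hsum]
  cases n with
  | zero =>
    simp only [Fs, Ts, PowerSeries.coeff_mk, and_true, Nat.zero_add,
      show Icc 1 0 = (∅ : Finset ℕ) from rfl, Finset.sum_empty, mul_zero, add_zero, zero_add,
      if_pos rfl]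
    rcases Nat.eq_zero_or_pos d with rfl | hd
    · simp [W_zero]
    · rw [if_neg (by omega)]
      have hrec := W_rec3 (n := 0) (m := d) (by omega) (by omega)
      simp only [show Icc 1 0 = (∅ : Finset ℕ) from rfl, Finset.sum_empty, zero_add,
        add_zero, Nat.zero_sub] at hrec
      rw [hrec, ← Finset.mul_sum, sum_Icc_sub (fun j => W 0 j) d]
      simp
  | succ n =>
    simp only [Fs, Ts, PowerSeries.coeff_mk, Nat.succ_ne_zero, if_false, and_false,
      Nat.succ_sub_one, Pv]
    have hrec := W_rec3 (n := n + 1) (m := n + 1 + d) (by omega) (by omega)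
    rw [hrec]
    have t2 : ∑ b ∈ Icc 1 (n + 1 + d), Polynomial.X * W (n + 1) (n + 1 + d - b)
        = Polynomial.X * ∑ e ∈ range d, W (n + 1) (n + 1 + e) := by
      rw [← Finset.mul_sum, sum_W_vert (n + 1) d]
    have t3 : ∑ a ∈ Icc 1 (n + 1), ∑ b ∈ Icc a (n + 1 + d),
          Polynomial.X * W (n + 1 - a) (n + 1 + d - b)
        = Polynomial.X * ∑ j ∈ range (n + 1), ∑ e ∈ range (d + 1), W j (j + e) := by
      have inner : ∀ a ∈ Icc 1 (n + 1),
          ∑ b ∈ Icc a (n + 1 + d), Polynomial.X * W (n + 1 - a) (n + 1 + d - b)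
          = Polynomial.X * ∑ e ∈ range (d + 1), W (n + 1 - a) (n + 1 - a + e) := by
        intro a ha
        simp only [mem_Icc] at ha
        rw [← Finset.mul_sum, sum_W_spid (n + 1) d a ha.1 ha.2]
      rw [Finset.sum_congr rfl inner,
        sum_Icc_sub (fun j => Polynomial.X * ∑ e ∈ range (d + 1), W j (j + e)) (n + 1),
        Finset.mul_sum]
    have t1 : ∑ a ∈ Icc 1 (n + 1), Polynomial.X * W (n + 1 - a) (n + 1 + d)
        = Polynomial.X * ∑ a ∈ Icc 1 (n + 1), W (n + 1 - a) (n + 1 + d) :=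
      (Finset.mul_sum _ _ _).symm
    rw [t1, t2, t3]
    have hPv : ∑ j ∈ range (n + 1), (PowerSeries.coeff j) (Ss d)
        = ∑ j ∈ range (n + 1), ∑ e ∈ range (d + 1), W j (j + e) :=
      Finset.sum_congr rfl fun j _ => coeff_Ss d j
    rw [hPv]
    ring

-- ## Series algebra
noncomputable def Ahat : PS := Rv * PowerSeries.X ^ 2 - (1 + Rv) * PowerSeries.X * (1 - PowerSeries.X)
noncomputable def Bhat : PS :=
  (1 - PowerSeries.X) * (1 + (1 + Rv) * PowerSeries.X + Rv * PowerSeries.X) - Rv * PowerSeries.X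
noncomputable def Cchat : PS := -(1 + Rv) * (1 - PowerSeries.X)

lemma EqC (d : ℕ) :
    (1 - PowerSeries.X) * (Fs d - (1 + Rv) * PowerSeries.X * Fs (d + 1))
      = (1 - PowerSeries.X) * (if d = 0 then 1 else 0)
        + Rv * (1 - PowerSeries.X) *
            ((∑ e ∈ range d, Fs e) - PowerSeries.X * ∑ e ∈ range (d + 1), Fs e)
        + Rv * PowerSeries.X * (∑ e ∈ range (d + 1), Fs e)
        - Rv * PowerSeries.X ^ 2 * (∑ e ∈ range (d + 2), Fs e) := by
  have hA := L_master d
  have hA1 := L_master (d + 1)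
  rw [if_neg (Nat.succ_ne_zero d)] at hA1
  have hT := L_T d
  have hP0 := L_P (Ss d)
  have hP1 := L_P (Ss (d + 1))
  have hS0 : Ss d = ∑ e ∈ range (d + 1), Fs e := rfl
  have hS1 : Ss (d + 1) = ∑ e ∈ range (d + 2), Fs e := rfl
  linear_combination (1 - PowerSeries.X) * hA + Rv * (1 - PowerSeries.X) * hT
    - PowerSeries.X * (1 - PowerSeries.X) * hA1 + Rv * PowerSeries.X * hP0
    - Rv * PowerSeries.X ^ 2 * hP1 + Rv * PowerSeries.X * hS0
    - Rv * PowerSeries.X ^ 2 * hS1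

lemma ThreeTerm (d : ℕ) :
    Ahat * Fs (d + 2) + Bhat * Fs (d + 1) + Cchat * Fs d
      + (if d = 0 then 1 - PowerSeries.X else 0) = 0 := by
  have h0 := EqC d
  have h1 := EqC (d + 1)
  rw [if_neg (Nat.succ_ne_zero d)] at h1
  have e1 : ∑ e ∈ range (d + 1), Fs e = (∑ e ∈ range d, Fs e) + Fs d :=
    Finset.sum_range_succ _ d
  have e2 : ∑ e ∈ range (d + 2), Fs e = (∑ e ∈ range (d + 1), Fs e) + Fs (d + 1) :=
    Finset.sum_range_succ _ (d + 1)
  have e3 : ∑ e ∈ range (d + 3), Fs e = (∑ e ∈ range (d + 2), Fs e) + Fs (d + 2) :=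
    Finset.sum_range_succ _ (d + 2)
  rw [e3, e2, e1] at h1
  rw [e2, e1] at h0
  have hif : (if d = 0 then (1 : PS) - PowerSeries.X else 0)
      = (1 - PowerSeries.X) * (if d = 0 then 1 else 0) := by split <;> ring
  rw [hif, Ahat, Bhat, Cchat]
  linear_combination h1 - h0

-- ## Uniqueness of power-series solutions of the 3-term recurrence
lemma coeff0_Ahat : PowerSeries.coeff 0 Ahat = 0 := by
  simp [Ahat, Rv, PowerSeries.coeff_zero_eq_constantCoeff]

lemma coeff0_Bhat : PowerSeries.coeff 0 Bhat = 1 := by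
  simp [Bhat, Rv, PowerSeries.coeff_zero_eq_constantCoeff]

lemma vanish (G : ℕ → PS) (h0 : G 0 = 0)
    (hrec : ∀ d, Ahat * G (d + 2) + Bhat * G (d + 1) + Cchat * G d = 0) :
    ∀ d, G d = 0 := by
  have key : ∀ n d, PowerSeries.coeff n (G d) = 0 := by
    intro n
    induction n using Nat.strong_induction_on with
    | _ n ih =>
      intro d
      induction d with
      | zero => rw [h0]; simp
      | succ d ihd =>
        have hc := congrArg (PowerSeries.coeff n) (hrec d)
        rw [map_add, map_add, PowerSeries.coeff_mul, PowerSeries.coeff_mul,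
          PowerSeries.coeff_mul, map_zero] at hc
        have s1 : ∑ p ∈ Finset.HasAntidiagonal.antidiagonal n,
            PowerSeries.coeff p.1 Ahat
              * PowerSeries.coeff p.2 (G (d + 2)) = 0 := by
          apply Finset.sum_eq_zero
          intro p hp
          rw [Finset.HasAntidiagonal.mem_antidiagonal] at hp
          rcases Nat.lt_or_ge p.2 n with h | h
          · rw [ih p.2 h (d + 2), mul_zero]
          · have hp1 : p.1 = 0 := by omega
            have hp2 : p.2 = n := by omega
            rw [hp1, coeff0_Ahat, zero_mul]
        have s3 : ∑ p ∈ Finset.HasAntidiagonal.antidiagonal n,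
            PowerSeries.coeff p.1 Cchat
              * PowerSeries.coeff p.2 (G d) = 0 := by
          apply Finset.sum_eq_zero
          intro p hp
          rw [Finset.HasAntidiagonal.mem_antidiagonal] at hp
          rcases Nat.lt_or_ge p.2 n with h | h
          · rw [ih p.2 h d, mul_zero]
          · have hp2 : p.2 = n := by omega
            rw [hp2, ihd, mul_zero]
        have s2 : ∑ p ∈ Finset.HasAntidiagonal.antidiagonal n,
            PowerSeries.coeff p.1 Bhat
              * PowerSeries.coeff p.2 (G (d + 1))
            = PowerSeries.coeff n (G (d + 1)) := by
          rw [Finset.sum_eq_single ((0 : ℕ), n)]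
          · rw [coeff0_Bhat, one_mul]
          · intro p hp hne
            rw [Finset.HasAntidiagonal.mem_antidiagonal] at hp
            have h2 : p.2 < n := by
              rcases Nat.lt_or_ge p.2 n with h | h
              · exact h
              · exfalso; apply hne; have : p.1 = 0 := by omega
                have : p.2 = n := by omega
                cases p; simp_all
            rw [ih p.2 h2 (d + 1), mul_zero]
          · intro h
            exact absurd (Finset.HasAntidiagonal.mem_antidiagonal.2 (by omega)) h
        rw [s1, s2, s3] at hc
        simpa using hc
  intro d
  exact PowerSeries.ext fun n => by rw [key n d, map_zero]

lemma geom : Fs 2 * Fs 2 = Fs 3 * Fs 1 := by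
  have h := vanish (fun d => Fs (d + 1) * Fs 2 - Fs (d + 2) * Fs 1)
    (by ring)
    (by
      intro d
      have t1 := ThreeTerm (d + 1)
      have t2 := ThreeTerm (d + 2)
      rw [if_neg (Nat.succ_ne_zero d)] at t1
      rw [if_neg (Nat.succ_ne_zero (d + 1))] at t2
      linear_combination Fs 2 * t1 - Fs 1 * t2)
  have h1 := h 1
  linear_combination h1

-- ## Final assembly
lemma main0 :
    (1 + Rv) * PowerSeries.X * ((2 * Rv + 1) * PowerSeries.X - Rv - 1) * Fs 0 ^ 2 -
      ((2 * Rv + 1) * PowerSeries.X ^ 2 - Rv * PowerSeries.X - 1) * Fs 0 +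
      (PowerSeries.X - 1) = 0 := by
  set t : PS := PowerSeries.X with ht
  have E1 := ThreeTerm 1
  rw [if_neg one_ne_zero, add_zero] at E1
  have E2 := ThreeTerm 0
  rw [if_pos rfl] at E2
  simp only [show (1:ℕ) + 2 = 3 from rfl, show (1:ℕ) + 1 = 2 from rfl,
    show (0:ℕ) + 2 = 2 from rfl, show (0:ℕ) + 1 = 1 from rfl] at E1 E2
  have E3 := EqC 0
  simp only [Finset.sum_range_succ, Finset.range_zero, Finset.sum_empty, Finset.range_one,
    Finset.sum_range_one, Finset.sum_singleton, zero_add, if_true, mul_one] at E3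
  have E4 := geom
  unfold Ahat Bhat Cchat at E1 E2
  rw [← ht] at E1 E2 E3
  have Q1 : (Rv * t ^ 2 - (1 + Rv) * t * (1 - t)) * (Fs 2 * Fs 2)
      + ((1 - t) * (1 + (1 + Rv) * t + Rv * t) - Rv * t) * (Fs 1 * Fs 2)
      + (-(1 + Rv) * (1 - t)) * (Fs 1 * Fs 1) = 0 := by
    linear_combination Fs 1 * E1 + (Rv * t ^ 2 - (1 + Rv) * t * (1 - t)) * E4
  have E5 : (Rv * t ^ 2 - (1 + Rv) * t * (1 - t)) * (-(1 + Rv) * (1 - t)) * (Fs 1 * Fs 1)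
      - ((1 - t) * (1 + (1 + Rv) * t + Rv * t) - Rv * t) * (1 - t)
          * ((1 + Rv) * Fs 0 - 1) * Fs 1
      + (1 - t) ^ 2 * ((1 + Rv) * Fs 0 - 1) ^ 2 = 0 := by
    linear_combination (Rv * t ^ 2 - (1 + Rv) * t * (1 - t)) * Q1
      - ((Rv * t ^ 2 - (1 + Rv) * t * (1 - t)) * Fs 2 + (1 - t) * ((1 + Rv) * Fs 0 - 1)) * E2
  have E3' : ((1 + Rv) * t * (1 - t) - Rv * t ^ 2) * Fs 1
      = ((1 - t) * (1 + Rv * t) - Rv * t + Rv * t ^ 2) * Fs 0 - (1 - t) := by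
    linear_combination -E3
  have E6 : (Rv * t * (t - 1) ^ 2 * ((2 * Rv + 1) * t - Rv - 1)) *
      ((1 + Rv) * t * ((2 * Rv + 1) * t - Rv - 1) * Fs 0 ^ 2 -
        ((2 * Rv + 1) * t ^ 2 - Rv * t - 1) * Fs 0 + (t - 1)) = 0 := by
    linear_combination ((1 + Rv) * t * (1 - t) - Rv * t ^ 2) ^ 2 * E5
      - ((Rv * t ^ 2 - (1 + Rv) * t * (1 - t)) * (-(1 + Rv) * (1 - t)) *
            ((((1 - t) * (1 + Rv * t) - Rv * t + Rv * t ^ 2) * Fs 0 - (1 - t))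
              + ((1 + Rv) * t * (1 - t) - Rv * t ^ 2) * Fs 1)
          - ((1 - t) * (1 + (1 + Rv) * t + Rv * t) - Rv * t) * ((1 - t) * ((1 + Rv) * Fs 0 - 1))
              * ((1 + Rv) * t * (1 - t) - Rv * t ^ 2)) * E3'
  have h1 : (Rv : PS) ≠ 0 := by
    intro h
    have h0 := congrArg (PowerSeries.constantCoeff) h
    simp only [Rv, PowerSeries.constantCoeff_C, map_zero] at h0
    exact Polynomial.X_ne_zero h0
  have h2 : (t : PS) ≠ 0 := PowerSeries.X_ne_zero
  have h3 : (t - 1 : PS) ≠ 0 := by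
    intro h
    have h0 := congrArg (PowerSeries.constantCoeff) h
    simp [ht] at h0
  have h4 : ((2 * Rv + 1) * t - Rv - 1 : PS) ≠ 0 := by
    intro h
    have h0 := congrArg (PowerSeries.constantCoeff) h
    simp only [map_sub, map_mul, map_add, map_one, PowerSeries.constantCoeff_X, ht, Rv,
      PowerSeries.constantCoeff_C, mul_zero, zero_sub, map_zero] at h0
    have h5 := congrArg (fun p => Polynomial.coeff p 0) h0
    simp at h5
  have hlam : (Rv * t * (t - 1) ^ 2 * ((2 * Rv + 1) * t - Rv - 1) : PS) ≠ 0 :=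
    mul_ne_zero (mul_ne_zero (mul_ne_zero h1 h2) (pow_ne_zero 2 h3)) h4
  have := mul_left_cancel₀ hlam (by rw [E6, mul_zero] :
    (Rv * t * (t - 1) ^ 2 * ((2 * Rv + 1) * t - Rv - 1)) *
      ((1 + Rv) * t * ((2 * Rv + 1) * t - Rv - 1) * Fs 0 ^ 2 -
        ((2 * Rv + 1) * t ^ 2 - Rv * t - 1) * Fs 0 + (t - 1))
      = (Rv * t * (t - 1) ^ 2 * ((2 * Rv + 1) * t - Rv - 1)) * 0)
  linear_combination this

lemma Fs0_eq : Fs 0 = PowerSeries.mk pMW := by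
  refine PowerSeries.ext fun n => ?_
  rw [Fs, PowerSeries.coeff_mk, PowerSeries.coeff_mk]
  rfl

end Stmt18

theorem stmt18 (Pw : PowerSeries (Polynomial ℚ))
    (hP : Pw = PowerSeries.mk pMW) :
    (1 + ρM) * PowerSeries.X * ((2 * ρM + 1) * PowerSeries.X - ρM - 1) * Pw ^ 2 -
      ((2 * ρM + 1) * PowerSeries.X ^ 2 - ρM * PowerSeries.X - 1) * Pw +
      (PowerSeries.X - 1) = 0 := by
  have hR : ρM = Stmt18.Rv := rfl
  rw [hP, ← Stmt18.Fs0_eq, hR]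
  exact Stmt18.main0
end

section
/- Let S be a step set that contains every horizontal step (a,0) with a ≥ 1 and such that every (a,b) ∈ S with b > 0 satisfies a ≤ 2b (the slope condition for the boundary (2i+1)). For n ≥ 0 let p_n be the number of S-paths from (0,0) to (2n,n) with boundary (2i+1), i.e. such that every node (x,i) satisfies x ≤ 2i, and let P(t) = Σ_{n≥0} p_n tⁿ. Let T(t) = Σ_{a≥1, (2a,a)∈S} tᵃ, let E(t) be the formal power series whose coefficient of tⁿ is Σ_{j=0}^{2n} a_{j,n}, and let F(t) be the formal power series with zero constant term whose coefficient of tⁿ (n ≥ 1) is Σ_{j=0}^{2n−1} a_{j,n}. Then in ℚ⟦t⟧: P(t) · (1 + (2 − T(t)) · F(t)) = E(t). -/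
/-- `p` has (right) boundary `s`: every node `(x, i)` satisfies `x < s i`. -/
def HasBoundary (s : ℕ → ℕ) (p : List (ℕ × ℕ)) : Prop :=
  ∀ j ≤ p.length, xPart p j < s (yPart p j)

namespace Stmt19

/-- total x displacement -/
def xLen (p : List (ℕ × ℕ)) : ℕ := (p.map Prod.fst).sum
def yLen (p : List (ℕ × ℕ)) : ℕ := (p.map Prod.snd).sum

@[simp] lemma xLen_nil : xLen [] = 0 := rfl
@[simp] lemma yLen_nil : yLen [] = 0 := rfl
@[simp] lemma xLen_cons (a : ℕ × ℕ) (l : List (ℕ × ℕ)) : xLen (a :: l) = a.1 + xLen l := rfl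
@[simp] lemma yLen_cons (a : ℕ × ℕ) (l : List (ℕ × ℕ)) : yLen (a :: l) = a.2 + yLen l := rfl
@[simp] lemma xLen_append (p q : List (ℕ × ℕ)) : xLen (p ++ q) = xLen p + xLen q := by
  simp [xLen]
@[simp] lemma yLen_append (p q : List (ℕ × ℕ)) : yLen (p ++ q) = yLen p + yLen q := by
  simp [yLen]

lemma xPart_eq (p : List (ℕ × ℕ)) (j : ℕ) : xPart p j = xLen (p.take j) := rfl
lemma yPart_eq (p : List (ℕ × ℕ)) (j : ℕ) : yPart p j = yLen (p.take j) := rfl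

@[simp] lemma xPart_zero (p : List (ℕ × ℕ)) : xPart p 0 = 0 := rfl
@[simp] lemma yPart_zero (p : List (ℕ × ℕ)) : yPart p 0 = 0 := rfl

@[simp] lemma xPart_length (p : List (ℕ × ℕ)) : xPart p p.length = xLen p := by
  simp [xPart_eq]
@[simp] lemma yPart_length (p : List (ℕ × ℕ)) : yPart p p.length = yLen p := by
  simp [yPart_eq]

lemma xPart_append_left (p q : List (ℕ × ℕ)) {j : ℕ} (hj : j ≤ p.length) :
    xPart (p ++ q) j = xPart p j := by
  rw [xPart_eq, xPart_eq, List.take_append,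
    Nat.sub_eq_zero_of_le hj, List.take_zero, List.append_nil]

lemma yPart_append_left (p q : List (ℕ × ℕ)) {j : ℕ} (hj : j ≤ p.length) :
    yPart (p ++ q) j = yPart p j := by
  rw [yPart_eq, yPart_eq, List.take_append,
    Nat.sub_eq_zero_of_le hj, List.take_zero, List.append_nil]

lemma xPart_append_right (p q : List (ℕ × ℕ)) (j : ℕ) :
    xPart (p ++ q) (p.length + j) = xLen p + xPart q j := by
  rw [xPart_eq, List.take_append, Nat.add_sub_cancel_left,
    List.take_of_length_le (by omega), xLen_append, xPart_eq]

lemma yPart_append_right (p q : List (ℕ × ℕ)) (j : ℕ) :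
    yPart (p ++ q) (p.length + j) = yLen p + yPart q j := by
  rw [yPart_eq, List.take_append, Nat.add_sub_cancel_left,
    List.take_of_length_le (by omega), yLen_append, yPart_eq]

lemma xPart_succ (p : List (ℕ × ℕ)) {j : ℕ} (hj : j < p.length) :
    xPart p (j + 1) = xPart p j + (p.get ⟨j, hj⟩).1 := by
  rw [xPart_eq, xPart_eq, List.take_succ, xLen_append,
    List.getElem?_eq_getElem hj]
  simp [xLen, List.get_eq_getElem]

lemma yPart_succ (p : List (ℕ × ℕ)) {j : ℕ} (hj : j < p.length) :
    yPart p (j + 1) = yPart p j + (p.get ⟨j, hj⟩).2 := by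
  rw [yPart_eq, yPart_eq, List.take_succ, yLen_append,
    List.getElem?_eq_getElem hj]
  simp [yLen, List.get_eq_getElem]

lemma xLen_take_le (p : List (ℕ × ℕ)) (j : ℕ) : xLen (p.take j) ≤ xLen p := by
  conv_rhs => rw [← List.take_append_drop j p]
  rw [xLen_append]; omega

lemma yLen_take_le (p : List (ℕ × ℕ)) (j : ℕ) : yLen (p.take j) ≤ yLen p := by
  conv_rhs => rw [← List.take_append_drop j p]
  rw [yLen_append]; omega

lemma xPart_le_xLen (p : List (ℕ × ℕ)) (j : ℕ) : xPart p j ≤ xLen p := xLen_take_le p j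

lemma yPart_le_yLen (p : List (ℕ × ℕ)) (j : ℕ) : yPart p j ≤ yLen p := yLen_take_le p j

lemma xPart_mono (p : List (ℕ × ℕ)) {i j : ℕ} (h : i ≤ j) : xPart p i ≤ xPart p j := by
  have : p.take i = (p.take j).take i := by rw [List.take_take, Nat.min_eq_left h]
  rw [xPart_eq, xPart_eq, this]
  exact xLen_take_le _ _

lemma yPart_mono (p : List (ℕ × ℕ)) {i j : ℕ} (h : i ≤ j) : yPart p i ≤ yPart p j := by
  have : p.take i = (p.take j).take i := by rw [List.take_take, Nat.min_eq_left h]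
  rw [yPart_eq, yPart_eq, this]
  exact yLen_take_le _ _


/-- all nodes satisfy x ≤ 2y -/
def Good (p : List (ℕ × ℕ)) : Prop := ∀ j ≤ p.length, xPart p j ≤ 2 * yPart p j

lemma hasBoundary_iff_good (p : List (ℕ × ℕ)) :
    HasBoundary (fun i => 2 * i + 1) p ↔ Good p := by
  unfold HasBoundary Good
  refine forall₂_congr fun j hj => ?_
  simp only []
  omega

lemma isPath_iff (S : Set (ℕ × ℕ)) (n m : ℕ) (p : List (ℕ × ℕ)) :
    IsPath S n m p ↔ (∀ st ∈ p, st ∈ S) ∧ xLen p = n ∧ yLen p = m := by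
  unfold IsPath; simp

variable (S : Set (ℕ × ℕ))

/-- boundary paths ending at (2n, n) -/
def Pset (n : ℕ) : Set (List (ℕ × ℕ)) :=
  {p | IsPath S (2 * n) n p ∧ HasBoundary (fun i => 2 * i + 1) p}

/-- good paths of height n (any end) -/
def Cset (n : ℕ) : Set (List (ℕ × ℕ)) :=
  {p | (∀ st ∈ p, st ∈ S) ∧ yLen p = n ∧ Good p}

/-- good paths of height n ending strictly below the line -/
def Dset (n : ℕ) : Set (List (ℕ × ℕ)) :=
  {p | p ∈ Cset S n ∧ xLen p < 2 * n}

/-- arbitrary paths of height n ending strictly below the line -/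
def Fset (n : ℕ) : Set (List (ℕ × ℕ)) :=
  {p | (∀ st ∈ p, st ∈ S) ∧ yLen p = n ∧ xLen p < 2 * n}

lemma mem_Pset_iff (n : ℕ) (p : List (ℕ × ℕ)) :
    p ∈ Pset S n ↔ (∀ st ∈ p, st ∈ S) ∧ xLen p = 2 * n ∧ yLen p = n ∧ Good p := by
  unfold Pset
  rw [Set.mem_setOf_eq, isPath_iff, hasBoundary_iff_good]
  tauto

section Finiteness

lemma finite_pair_lists (s : Set (ℕ × ℕ)) (hs : s.Finite) (L : ℕ) :
    {l : List (ℕ × ℕ) | l.length ≤ L ∧ ∀ x ∈ l, x ∈ s}.Finite := by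
  induction L with
  | zero =>
    apply Set.Finite.subset (Set.finite_singleton ([] : List (ℕ × ℕ)))
    rintro l ⟨hl, -⟩
    simp [List.length_eq_zero_iff.1 (Nat.le_zero.1 hl)]
  | succ L ih =>
    apply Set.Finite.subset (Set.Finite.insert []
      (((hs.prod ih).image (fun q : (ℕ × ℕ) × List (ℕ × ℕ) => q.1 :: q.2))))
    rintro (_ | ⟨a, l⟩) ⟨hl, hmem⟩
    · exact Set.mem_insert _ _
    · refine Set.mem_insert_of_mem _ ⟨(a, l), ⟨hmem a (by simp), ?_, ?_⟩, rfl⟩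
      · simpa using Nat.succ_le_succ_iff.mp hl
      · exact fun x hx => hmem x (List.mem_cons_of_mem _ hx)

lemma length_le_of_ne_zero (p : List (ℕ × ℕ)) (hp : ∀ st ∈ p, st ≠ (0, 0)) :
    p.length ≤ xLen p + yLen p := by
  induction p with
  | nil => simp
  | cons a l ih =>
    have h1 : a ≠ (0, 0) := hp a (by simp)
    have h2 : 1 ≤ a.1 + a.2 := by
      rcases Nat.eq_zero_or_pos (a.1 + a.2) with h | h
      · exact absurd (Prod.ext (by omega) (by omega)) h1
      · exact h
    have := ih (fun st hst => hp st (List.mem_cons_of_mem _ hst))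
    simp only [List.length_cons, xLen_cons, yLen_cons]
    omega

lemma finite_paths (h00 : (0, 0) ∉ S) (X Y : ℕ) :
    {p : List (ℕ × ℕ) | (∀ st ∈ p, st ∈ S) ∧ xLen p ≤ X ∧ yLen p ≤ Y}.Finite := by
  apply Set.Finite.subset (finite_pair_lists {q | q.1 ≤ X ∧ q.2 ≤ Y}
    ((Set.finite_Iic X).prod (Set.finite_Iic Y) |>.subset (by
      rintro ⟨a, b⟩ ⟨h1, h2⟩; exact ⟨h1, h2⟩)) (X + Y))
  rintro p ⟨hmem, hx, hy⟩
  constructor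
  · calc p.length ≤ xLen p + yLen p :=
        length_le_of_ne_zero p (fun st hst h => h00 (h ▸ hmem st hst))
      _ ≤ X + Y := by omega
  · intro st hst
    constructor
    · calc st.1 ≤ xLen p := List.single_le_sum (by simp) _ (List.mem_map_of_mem (f := Prod.fst) hst)
        _ ≤ X := hx
    · calc st.2 ≤ yLen p := List.single_le_sum (by simp) _ (List.mem_map_of_mem (f := Prod.snd) hst)
        _ ≤ Y := hy

variable {S}
variable (h00 : (0, 0) ∉ S)
include h00

lemma Pset_finite (n : ℕ) : (Pset S n).Finite := by
  apply (finite_paths S h00 (2 * n) n).subset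
  intro p hp
  rw [mem_Pset_iff] at hp
  exact ⟨hp.1, le_of_eq hp.2.1, le_of_eq hp.2.2.1⟩

lemma Cset_finite (n : ℕ) : (Cset S n).Finite := by
  apply (finite_paths S h00 (2 * n) n).subset
  rintro p ⟨hmem, hy, hg⟩
  refine ⟨hmem, ?_, le_of_eq hy⟩
  have := hg p.length le_rfl
  simp only [xPart_length, yPart_length] at this
  omega

lemma Dset_finite (n : ℕ) : (Dset S n).Finite := (Cset_finite h00 n).subset fun p hp => hp.1

lemma Fset_finite (n : ℕ) : (Fset S n).Finite := by
  apply (finite_paths S h00 (2 * n) n).subset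
  rintro p ⟨hmem, hy, hx⟩
  exact ⟨hmem, by omega, le_of_eq hy⟩

lemma isPathSet_finite (j n : ℕ) : {p : List (ℕ × ℕ) | IsPath S j n p}.Finite := by
  apply (finite_paths S h00 j n).subset
  intro p hp
  rw [Set.mem_setOf_eq, isPath_iff] at hp
  exact ⟨hp.1, le_of_eq hp.2.1, le_of_eq hp.2.2⟩

end Finiteness

section CountingHelpers

lemma ncard_prod {α β : Type*} (s : Set α) (t : Set β) :
    (s ×ˢ t).ncard = s.ncard * t.ncard := by
  rw [← Nat.card_coe_set_eq, ← Nat.card_coe_set_eq, ← Nat.card_coe_set_eq,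
    ← Nat.card_prod]
  exact Nat.card_congr (Equiv.Set.prod s t)

lemma ncard_biUnion_range {α : Type*} {A : ℕ → Set α} (n : ℕ)
    (hfin : ∀ i, i < n → (A i).Finite)
    (hdisj : ∀ i j, i < n → j < n → i ≠ j → Disjoint (A i) (A j)) :
    (⋃ i ∈ Finset.range n, A i).ncard = ∑ i ∈ Finset.range n, (A i).ncard := by
  induction n with
  | zero => simp
  | succ n ih =>
    rw [Finset.sum_range_succ, ← ih (fun i hi => hfin i (by omega))
      (fun i j hi hj => hdisj i j (by omega) (by omega))]
    have heq : (⋃ i ∈ Finset.range (n + 1), A i) = (⋃ i ∈ Finset.range n, A i) ∪ A n := by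
      rw [Finset.range_add_one, Finset.set_biUnion_insert]
      exact Set.union_comm _ _
    rw [heq, Set.ncard_union_eq ?_ ?_ (hfin n (by omega))]
    · apply Set.disjoint_iUnion₂_left.2
      intro i hi
      simp only [Finset.mem_coe, Finset.mem_range] at hi
      exact hdisj i n (by omega) (by omega) (by omega)
    · exact Set.Finite.biUnion (Finset.range n).finite_toSet
        (fun i hi => hfin i (by simp only [Finset.mem_coe, Finset.mem_range] at hi; omega))

lemma good_append (p r : List (ℕ × ℕ)) :
    Good (p ++ r) ↔ Good p ∧ ∀ j ≤ r.length, xLen p + xPart r j ≤ 2 * (yLen p + yPart r j) := by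
  constructor
  · intro h
    constructor
    · intro j hj
      have := h j (by simp; omega)
      rwa [xPart_append_left _ _ hj, yPart_append_left _ _ hj] at this
    · intro j hj
      have := h (p.length + j) (by simp; omega)
      rwa [xPart_append_right, yPart_append_right] at this
  · rintro ⟨h1, h2⟩ j hj
    rcases le_or_gt j p.length with h | h
    · rw [xPart_append_left _ _ h, yPart_append_left _ _ h]
      exact h1 j h
    · obtain ⟨i, rfl⟩ : ∃ i, j = p.length + i := ⟨j - p.length, by omega⟩
      rw [xPart_append_right, yPart_append_right]
      exact h2 i (by simp at hj; omega)

@[simp] lemma good_nil : Good [] := by intro j hj; simp at hj; simp [hj]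

end CountingHelpers

section Counting

open Classical

variable {S : Set (ℕ × ℕ)} (h00 : (0, 0) ∉ S)

lemma xPart_cons_succ (a : ℕ × ℕ) (l : List (ℕ × ℕ)) (j : ℕ) :
    xPart (a :: l) (j + 1) = a.1 + xPart l j := by
  simp [xPart_eq, xLen]

lemma yPart_cons_succ (a : ℕ × ℕ) (l : List (ℕ × ℕ)) (j : ℕ) :
    yPart (a :: l) (j + 1) = a.2 + yPart l j := by
  simp [yPart_eq, yLen]

lemma xLen_le_of_good {p : List (ℕ × ℕ)} (hp : Good p) : xLen p ≤ 2 * yLen p := by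
  have := hp p.length le_rfl
  simpa using this

include h00 in
lemma eq_nil_of_lens (p : List (ℕ × ℕ)) (hmem : ∀ st ∈ p, st ∈ S)
    (hx : xLen p = 0) (hy : yLen p = 0) : p = [] := by
  cases p with
  | nil => rfl
  | cons a l =>
    exfalso
    simp only [xLen_cons, yLen_cons] at hx hy
    have : a = (0, 0) := Prod.ext (by omega) (by omega)
    exact h00 (this ▸ hmem a (by simp))

include h00 in
lemma Pset_zero : Pset S 0 = {[]} := by
  ext p
  rw [mem_Pset_iff, Set.mem_singleton_iff]
  constructor
  · rintro ⟨hmem, hx, hy, -⟩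
    exact eq_nil_of_lens h00 p hmem (by omega) hy
  · rintro rfl
    exact ⟨by simp, by simp, by simp, good_nil⟩

lemma Dset_zero : Dset S 0 = ∅ := by
  ext p
  simp only [Dset, Set.mem_setOf_eq, Set.mem_empty_iff_false, iff_false]
  rintro ⟨-, h⟩
  omega

include h00 in
/-- N4 : C = P + D -/
lemma ncard_Cset (n : ℕ) :
    (Cset S n).ncard = (Pset S n).ncard + (Dset S n).ncard := by
  have hsplit : Cset S n = Pset S n ∪ Dset S n := by
    ext p
    simp only [Set.mem_union, mem_Pset_iff, Dset, Set.mem_setOf_eq, Cset]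
    constructor
    · rintro ⟨hmem, hy, hg⟩
      have hle : xLen p ≤ 2 * n := hy ▸ xLen_le_of_good hg
      rcases eq_or_lt_of_le hle with h | h
      · exact Or.inl ⟨hmem, h, hy, hg⟩
      · exact Or.inr ⟨⟨hmem, hy, hg⟩, h⟩
    · rintro (⟨hmem, hx, hy, hg⟩ | ⟨⟨hmem, hy, hg⟩, -⟩) <;> exact ⟨hmem, hy, hg⟩
  rw [hsplit, Set.ncard_union_eq ?_ (Pset_finite h00 n) (Dset_finite h00 n)]
  rw [Set.disjoint_left]
  rintro p hp hd
  rw [mem_Pset_iff] at hp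
  exact absurd hp.2.1 (by have := hd.2; omega)

include h00 in
/-- NF : F as a sum of aCounts -/
lemma ncard_Fset (n : ℕ) :
    (Fset S n).ncard = ∑ j ∈ Finset.range (2 * n), aCount S j n := by
  have hsplit : Fset S n = ⋃ j ∈ Finset.range (2 * n), {p | IsPath S j n p} := by
    ext p
    simp only [Fset, Set.mem_setOf_eq, Set.mem_iUnion, Finset.mem_range, exists_prop]
    constructor
    · rintro ⟨hmem, hy, hx⟩
      exact ⟨xLen p, hx, (isPath_iff S _ _ p).2 ⟨hmem, rfl, hy⟩⟩
    · rintro ⟨j, hj, hp⟩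
      rw [isPath_iff] at hp
      exact ⟨hp.1, hp.2.2, hp.2.1 ▸ hj⟩
  rw [hsplit, ncard_biUnion_range _ (fun i _ => isPathSet_finite h00 i n)]
  · rfl
  · intro i j _ _ hij
    rw [Set.disjoint_left]
    intro p hp hp'
    rw [Set.mem_setOf_eq, isPath_iff] at hp hp'
    exact hij (hp.2.1 ▸ hp'.2.1)

variable (hhoriz : ∀ a : ℕ, 1 ≤ a → (a, 0) ∈ S)
variable (hslope : ∀ a b : ℕ, (a, b) ∈ S → 0 < b → a ≤ 2 * b)

lemma good_concat_iff (p : List (ℕ × ℕ)) (st : ℕ × ℕ) :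
    Good (p ++ [st]) ↔ Good p ∧ xLen p + st.1 ≤ 2 * (yLen p + st.2) := by
  rw [good_append]
  constructor
  · rintro ⟨h1, h2⟩
    refine ⟨h1, ?_⟩
    have := h2 1 (by simp)
    simpa [xPart_cons_succ, yPart_cons_succ] using this
  · rintro ⟨h1, h2⟩
    refine ⟨h1, ?_⟩
    intro j hj
    simp only [List.length_singleton] at hj
    interval_cases j
    · simpa using xLen_le_of_good h1
    · simpa [xPart_cons_succ, yPart_cons_succ] using h2

include h00 hhoriz hslope in
/-- N3 : P = 1 + D + T * P -/
lemma ncard_Pset (n : ℕ) :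
    (Pset S n).ncard = (if n = 0 then 1 else 0) + (Dset S n).ncard
      + ∑ a ∈ Finset.range (n + 1),
          (if 1 ≤ a ∧ (2 * a, a) ∈ S then 1 else 0) * (Pset S (n - a)).ncard := by
  rcases Nat.eq_zero_or_pos n with rfl | hn
  · rw [Pset_zero h00, Dset_zero]
    simp
  -- n ≥ 1
  have hifn : (if n = 0 then 1 else 0) = 0 := by simp [Nat.pos_iff_ne_zero.1 hn]
  rw [hifn, Nat.zero_add]
  set B : Set (List (ℕ × ℕ)) := {q ∈ Pset S n | ∃ p e, q = p ++ [(e, 0)]} with hB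
  set A : ℕ → Set (List (ℕ × ℕ)) :=
    fun a => {q ∈ Pset S n | ∃ p, q = p ++ [(2 * a, a)]} with hA
  -- coverage
  have hcover : Pset S n = B ∪ ⋃ a ∈ Finset.range (n + 1), A a := by
    ext q
    constructor
    · intro hq
      have hqS := ((mem_Pset_iff S n q).1 hq).1
      have hxq := ((mem_Pset_iff S n q).1 hq).2.1
      have hyq := ((mem_Pset_iff S n q).1 hq).2.2.1
      have hgq := ((mem_Pset_iff S n q).1 hq).2.2.2
      have hne : q ≠ [] := by
        rintro rfl
        simp only [yLen_nil] at hyq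
        omega
      obtain ⟨p, st, rfl⟩ : ∃ p st, q = p ++ [st] := ⟨q.dropLast, q.getLast hne, (List.dropLast_append_getLast hne).symm⟩
      have hstS : st ∈ S := hqS st (by simp)
      rcases Nat.eq_zero_or_pos st.2 with h2 | h2
      · left
        exact ⟨hq, p, st.1, by rw [← h2]⟩
      · right
        have hslope' := hslope st.1 st.2 (by rw [Prod.mk.eta]; exact hstS) h2
        have hgp := (good_concat_iff p st).1 hgq
        simp only [xLen_append, yLen_append, xLen_cons, yLen_cons, xLen_nil, yLen_nil] at hxq hyq
        have hst1 : st.1 = 2 * st.2 := by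
          have := xLen_le_of_good hgp.1
          omega
        simp only [Set.mem_iUnion, Finset.mem_range, exists_prop]
        refine ⟨st.2, by omega, hq, p, ?_⟩
        rw [← hst1]
    · rintro (hq | hq)
      · exact hq.1
      · simp only [Set.mem_iUnion] at hq
        obtain ⟨a, -, hq, -⟩ := hq
        exact hq
  -- disjointness of B and the A's
  have hlast : ∀ (p p' : List (ℕ × ℕ)) (st st' : ℕ × ℕ),
      p ++ [st] = p' ++ [st'] → st = st' := by
    intro p p' st st' h
    have := congrArg (fun l => List.getLast? l) h
    simpa using this
  have hAB : ∀ a, Disjoint (A a) B := by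
    intro a
    rw [Set.disjoint_left]
    rintro q ⟨hq, p, rfl⟩ ⟨-, p', e, he⟩
    have := hlast _ _ _ _ he
    have h0 : (2 * a, a) = ((0 : ℕ), (0 : ℕ)) := by
      have : a = 0 := by simpa using congrArg Prod.snd this
      simp [this]
    have : (0, 0) ∈ S := by
      have := ((mem_Pset_iff S n _).1 hq).1 (2 * a, a) (by simp)
      rwa [h0] at this
    exact h00 this
  have hAA : ∀ a a', a ≠ a' → Disjoint (A a) (A a') := by
    intro a a' haa
    rw [Set.disjoint_left]
    rintro q ⟨hq, p, rfl⟩ ⟨-, p', he⟩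
    have := hlast _ _ _ _ he
    exact haa (by simpa using congrArg Prod.snd this)
  -- cards
  have hBfin : B.Finite := (Pset_finite h00 n).subset fun q hq => hq.1
  have hAfin : ∀ a, (A a).Finite := fun a => (Pset_finite h00 n).subset fun q hq => hq.1
  have hBcard : B.ncard = (Dset S n).ncard := by
    have himg : B = (fun d => d ++ [(2 * n - xLen d, 0)]) '' Dset S n := by
      ext q
      constructor
      · rintro ⟨hq, p, e, rfl⟩
        rw [mem_Pset_iff] at hq
        obtain ⟨hqS, hx, hy, hg⟩ := hq
        simp only [xLen_append, yLen_append, xLen_cons, yLen_cons, xLen_nil, yLen_nil] at hx hy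
        have he1 : 1 ≤ e := by
          by_contra h
          have : (0, 0) ∈ S := by
            have := hqS (e, 0) (by simp)
            have he0 : e = 0 := by omega
            rwa [he0] at this
          exact h00 this
        have hgp := ((good_concat_iff p (e, 0)).1 hg).1
        refine ⟨p, ⟨⟨fun st hst => hqS st (by simp [hst]), by omega, hgp⟩, by omega⟩, ?_⟩
        have : 2 * n - xLen p = e := by omega
        show p ++ [(2 * n - xLen p, 0)] = p ++ [(e, 0)]
        rw [this]
      · rintro ⟨d, ⟨⟨hdS, hdy, hdg⟩, hdx⟩, rfl⟩
        refine ⟨?_, d, 2 * n - xLen d, rfl⟩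
        rw [mem_Pset_iff]
        refine ⟨?_, ?_, ?_, ?_⟩
        · intro st hst
          rcases List.mem_append.1 hst with h | h
          · exact hdS st h
          · simp only [List.mem_singleton] at h
            subst h
            exact hhoriz _ (by omega)
        · simp only [xLen_append, xLen_cons, xLen_nil]; omega
        · simp only [yLen_append, yLen_cons, yLen_nil]; omega
        · rw [good_concat_iff]
          exact ⟨hdg, by simp; omega⟩
    rw [himg]
    apply Set.ncard_image_of_injOn
    intro d hd d' hd' h
    have := congrArg List.dropLast h
    simpa using this
  have hAcard : ∀ a ∈ Finset.range (n + 1),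
      (A a).ncard = (if 1 ≤ a ∧ (2 * a, a) ∈ S then 1 else 0) * (Pset S (n - a)).ncard := by
    intro a ha
    rw [Finset.mem_range] at ha
    by_cases hc : 1 ≤ a ∧ (2 * a, a) ∈ S
    · rw [if_pos hc, one_mul]
      have himg : A a = (fun p => p ++ [(2 * a, a)]) '' Pset S (n - a) := by
        ext q
        constructor
        · rintro ⟨hq, p, rfl⟩
          rw [mem_Pset_iff] at hq
          obtain ⟨hqS, hx, hy, hg⟩ := hq
          simp only [xLen_append, yLen_append, xLen_cons, yLen_cons, xLen_nil, yLen_nil] at hx hy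
          refine ⟨p, ?_, rfl⟩
          rw [mem_Pset_iff]
          exact ⟨fun st hst => hqS st (by simp [hst]), by omega, by omega,
            ((good_concat_iff p _).1 hg).1⟩
        · rintro ⟨p, hp, rfl⟩
          rw [mem_Pset_iff] at hp
          obtain ⟨hpS, hx, hy, hg⟩ := hp
          refine ⟨?_, p, rfl⟩
          rw [mem_Pset_iff]
          refine ⟨?_, ?_, ?_, ?_⟩
          · intro st hst
            rcases List.mem_append.1 hst with h | h
            · exact hpS st h
            · simp only [List.mem_singleton] at h
              subst h
              exact hc.2
          · simp only [xLen_append, xLen_cons, xLen_nil]; omega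
          · simp only [yLen_append, yLen_cons, yLen_nil]; omega
          · rw [good_concat_iff]
            exact ⟨hg, by simp; omega⟩
      rw [himg]
      apply Set.ncard_image_of_injOn
      intro d hd d' hd' h
      have := congrArg List.dropLast h
      simpa using this
    · rw [if_neg hc, zero_mul]
      rw [Set.ncard_eq_zero (hAfin a)]
      ext q
      simp only [Set.mem_empty_iff_false, iff_false]
      rintro ⟨hq, p, rfl⟩
      have hmem : (2 * a, a) ∈ S := ((mem_Pset_iff S n _).1 hq).1 (2 * a, a) (by simp)
      rcases Nat.eq_zero_or_pos a with rfl | ha1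
      · exact h00 (by simpa using hmem)
      · exact hc ⟨ha1, hmem⟩
  -- assemble
  rw [hcover, Set.ncard_union_eq ?_ hBfin ?_, hBcard,
    ncard_biUnion_range _ (fun i _ => hAfin i) (fun i j _ _ hij => hAA i j hij),
    Finset.sum_congr rfl hAcard]
  · exact Set.disjoint_iUnion₂_right.2 fun a _ => (hAB a).symm
  · exact Set.Finite.biUnion (Finset.range (n + 1)).finite_toSet (fun i _ => hAfin i)

include h00 hhoriz hslope in
/-- N2 : G = P + C * F -/
lemma ncard_Gset (n : ℕ) :
    aCount S (2 * n) n = (Pset S n).ncard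
      + ∑ i ∈ Finset.range (n + 1), (Cset S i).ncard * (Fset S (n - i)).ncard := by
  classical
  set Φ : List (ℕ × ℕ) × List (ℕ × ℕ) → List (ℕ × ℕ) :=
    fun cw => cw.1 ++ (2 * n - (xLen cw.1 + xLen cw.2), 0) :: cw.2 with hΦ
  set Dom : Set (List (ℕ × ℕ) × List (ℕ × ℕ)) :=
    ⋃ i ∈ Finset.range (n + 1), (Cset S i ×ˢ Fset S (n - i)) with hDom
  -- specification of Φ on Dom
  have hspec : ∀ c w i, i ≤ n → c ∈ Cset S i → w ∈ Fset S (n - i) →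
      IsPath S (2 * n) n (Φ (c, w)) ∧
      (∀ j ≤ c.length, xPart (Φ (c, w)) j ≤ 2 * yPart (Φ (c, w)) j) ∧
      2 * yPart (Φ (c, w)) (c.length + 1) < xPart (Φ (c, w)) (c.length + 1) := by
    rintro c w i hin ⟨hcS, hcy, hcg⟩ ⟨hwS, hwy, hwx⟩
    have hxc : xLen c ≤ 2 * i := hcy ▸ xLen_le_of_good hcg
    have hkey : xLen c + xLen w + 1 ≤ 2 * n := by omega
    have hx1 : xPart (Φ (c, w)) (c.length + 1)
        = xLen c + (2 * n - (xLen c + xLen w)) := by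
      show xPart (c ++ _ :: w) (c.length + 1) = _
      rw [xPart_append_right, xPart_cons_succ]
      simp
    have hy1 : yPart (Φ (c, w)) (c.length + 1) = i := by
      show yPart (c ++ _ :: w) (c.length + 1) = _
      rw [yPart_append_right, yPart_cons_succ]
      simp [hcy]
    refine ⟨?_, ?_, ?_⟩
    · rw [isPath_iff]
      refine ⟨?_, ?_, ?_⟩
      · intro st hst
        simp only [hΦ, List.mem_append, List.mem_cons] at hst
        rcases hst with h | h | h
        · exact hcS st h
        · subst h
          exact hhoriz _ (by omega)
        · exact hwS st h
      · show xLen (c ++ _ :: w) = 2 * n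
        simp only [xLen_append, xLen_cons]
        omega
      · show yLen (c ++ _ :: w) = n
        simp only [yLen_append, yLen_cons]
        omega
    · intro j hj
      show xPart (c ++ _ :: w) j ≤ 2 * yPart (c ++ _ :: w) j
      rw [xPart_append_left _ _ hj, yPart_append_left _ _ hj]
      exact hcg j hj
    · rw [hx1, hy1]
      omega
  -- the image characterization
  have himg : {q | IsPath S (2 * n) n q ∧ ¬ Good q} = Φ '' Dom := by
    ext q
    constructor
    · rintro ⟨hq, hng⟩
      have hqS := ((isPath_iff S _ _ q).1 hq).1
      have hqx := ((isPath_iff S _ _ q).1 hq).2.1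
      have hqy := ((isPath_iff S _ _ q).1 hq).2.2
      unfold Good at hng
      push_neg at hng
      obtain ⟨j₁, hj₁, hbad₁⟩ := hng
      have hex : ∃ j, 2 * yPart q j < xPart q j := ⟨j₁, hbad₁⟩
      set j0 := Nat.find hex with hj0
      have hbad0 : 2 * yPart q j0 < xPart q j0 := Nat.find_spec hex
      have hmin : ∀ m, m < j0 → xPart q m ≤ 2 * yPart q m := by
        intro m hm
        exact not_lt.1 (Nat.find_min hex hm)
      have hj0le : j0 ≤ q.length := le_trans (Nat.find_min' hex hbad₁) hj₁
      have hj0pos : 1 ≤ j0 := by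
        rcases Nat.eq_zero_or_pos j0 with h | h
        · rw [h] at hbad0; simp at hbad0
        · exact h
      obtain ⟨jc, hjceq⟩ : ∃ jc, j0 = jc + 1 := ⟨j0 - 1, by omega⟩
      rw [hjceq] at hbad0
      have hjc : jc < q.length := by omega
      set st := q.get ⟨jc, hjc⟩ with hst
      set c := q.take jc with hc
      set w := q.drop (jc + 1) with hw
      have hqeq : q = c ++ st :: w := by
        rw [hc, hw, hst]
        rw [List.get_eq_getElem]
        rw [List.getElem_cons_drop]
        exact (List.take_append_drop jc q).symm
      have hclen : c.length = jc := by
        rw [hc, List.length_take]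
        omega
      have hst2 : st.2 = 0 := by
        by_contra hst2
        have hstS : st ∈ S := hqS st (by rw [hst]; exact q.get_mem ⟨jc, hjc⟩)
        have := hslope st.1 st.2 (by rw [Prod.mk.eta]; exact hstS) (by omega)
        have hxs := xPart_succ q hjc
        have hys := yPart_succ q hjc
        have hgjc := hmin jc (by omega)
        rw [← hst] at hxs hys
        omega
      -- prefix agreement
      have hagree : ∀ j, j ≤ jc → xPart c j = xPart q j ∧ yPart c j = yPart q j := by
        intro j hj
        have htt : c.take j = q.take j := by
          rw [hc, List.take_take, Nat.min_eq_left hj]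
        constructor
        · rw [xPart_eq, xPart_eq, htt]
        · rw [yPart_eq, yPart_eq, htt]
      set i := yLen c with hi
      have hyc : yPart q jc = i := by
        rw [hi, hc, yPart_eq]
      have hxq1 : xPart q (jc + 1) = xLen c + st.1 := by
        have := xPart_succ q hjc
        rw [this, ← hst]
        have := (hagree jc le_rfl).1
        rw [← this, hc, xPart_eq, List.take_take, Nat.min_self]
      have hyq1 : yPart q (jc + 1) = i := by
        have := yPart_succ q hjc
        rw [this, ← hst, hst2, hyc]
        omega
      -- totals
      have htotx : xLen c + st.1 + xLen w = 2 * n := by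
        have := congrArg xLen hqeq
        simp only [xLen_append, xLen_cons] at this
        omega
      have htoty : i + yLen w = n := by
        have := congrArg yLen hqeq
        simp only [yLen_append, yLen_cons] at this
        rw [hst2] at this
        omega
      have hin : i ≤ n := by omega
      have hgc : Good c := by
        intro j hj
        rw [hclen] at hj
        rw [(hagree j hj).1, (hagree j hj).2]
        exact hmin j (by omega)
      have hcC : c ∈ Cset S i := by
        refine ⟨fun x hx => hqS x (List.take_subset _ _ hx), rfl, hgc⟩
      have hwx : xLen w < 2 * (n - i) := by
        rw [hxq1, hyq1] at hbad0
        omega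
      have hwF : w ∈ Fset S (n - i) := by
        refine ⟨fun x hx => hqS x (List.drop_subset _ _ hx), by omega, hwx⟩
      refine ⟨(c, w), ?_, ?_⟩
      · rw [hDom]
        simp only [Set.mem_iUnion, Finset.mem_range, exists_prop]
        exact ⟨i, by omega, hcC, hwF⟩
      · show c ++ (2 * n - (xLen c + xLen w), 0) :: w = q
        rw [hqeq]
        congr 1
        have h5 : 2 * n - (xLen c + xLen w) = st.1 := by omega
        rw [h5, ← hst2, Prod.mk.eta]
    · rintro ⟨⟨c, w⟩, hcw, rfl⟩
      rw [hDom] at hcw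
      simp only [Set.mem_iUnion, Finset.mem_range, exists_prop] at hcw
      obtain ⟨i, hin, hcC, hwF⟩ := hcw
      obtain ⟨h1, h2, h3⟩ := hspec c w i (by omega) hcC hwF
      refine ⟨h1, ?_⟩
      intro hg
      have hlen : c.length + 1 ≤ (Φ (c, w)).length := by
        show c.length + 1 ≤ (c ++ _ :: w).length
        simp
      exact absurd (hg (c.length + 1) hlen) (by omega)
  -- injectivity
  have hinj : Set.InjOn Φ Dom := by
    have key : ∀ c w i c' w' i', i ≤ n → i' ≤ n → c ∈ Cset S i → w ∈ Fset S (n - i) →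
        c' ∈ Cset S i' → w' ∈ Fset S (n - i') → Φ (c, w) = Φ (c', w') →
        c.length < c'.length → False := by
      intro c w i c' w' i' hi hi' hcC hwF hcC' hwF' heq hlt
      obtain ⟨-, -, h3⟩ := hspec c w i hi hcC hwF
      obtain ⟨-, h2', -⟩ := hspec c' w' i' hi' hcC' hwF'
      rw [heq] at h3
      exact absurd (h2' (c.length + 1) (by omega)) (by omega)
    rintro ⟨c, w⟩ hcw ⟨c', w'⟩ hcw' heq
    rw [hDom] at hcw hcw'
    simp only [Set.mem_iUnion, Finset.mem_range, exists_prop] at hcw hcw'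
    obtain ⟨i, hin, hcC, hwF⟩ := hcw
    obtain ⟨i', hin', hcC', hwF'⟩ := hcw'
    have hlen : c.length = c'.length := by
      rcases lt_trichotomy c.length c'.length with h | h | h
      · exact absurd (key c w i c' w' i' (by omega) (by omega) hcC hwF hcC' hwF' heq h) id
      · exact h
      · exact absurd (key c' w' i' c w i (by omega) (by omega) hcC' hwF' hcC hwF heq.symm h) id
    have hceq : c = c' := by
      have h1 : (Φ (c, w)).take c.length = c := by
        show (c ++ _ :: w).take c.length = c
        exact List.take_left
      have h2 : (Φ (c', w')).take c'.length = c' := by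
        show (c' ++ _ :: w').take c'.length = c'
        exact List.take_left
      rw [← h1, ← h2, heq, hlen]
    subst hceq
    have hweq : w = w' := by
      have := List.append_cancel_left heq
      exact List.tail_eq_of_cons_eq this
    rw [hweq]
  -- assemble the count
  have hsplit : {q | IsPath S (2 * n) n q} = Pset S n ∪ {q | IsPath S (2 * n) n q ∧ ¬ Good q} := by
    ext q
    simp only [Set.mem_setOf_eq, Set.mem_union, Pset, hasBoundary_iff_good]
    by_cases hg : Good q <;> tauto
  have hbadfin : {q | IsPath S (2 * n) n q ∧ ¬ Good q}.Finite :=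
    (isPathSet_finite h00 (2 * n) n).subset fun q hq => hq.1
  have hdisj : Disjoint (Pset S n) {q | IsPath S (2 * n) n q ∧ ¬ Good q} := by
    rw [Set.disjoint_left]
    rintro q hq ⟨-, hng⟩
    exact hng ((hasBoundary_iff_good q).1 hq.2)
  show {q | IsPath S (2 * n) n q}.ncard = _
  rw [hsplit, Set.ncard_union_eq hdisj (Pset_finite h00 n) hbadfin]
  congr 1
  rw [himg, Set.ncard_image_of_injOn hinj, hDom]
  rw [ncard_biUnion_range _ ?_ ?_]
  · exact Finset.sum_congr rfl fun i _ => ncard_prod _ _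
  · exact fun i _ => (Cset_finite h00 i).prod (Fset_finite h00 (n - i))
  · intro i j hi hj hij
    rw [Set.disjoint_left]
    rintro ⟨c, w⟩ ⟨hcC, -⟩ ⟨hcC', -⟩
    exact hij (hcC.2.1 ▸ hcC'.2.1)

end Counting

end Stmt19


open Classical in
theorem stmt19 (S : Set (ℕ × ℕ)) (h00 : (0, 0) ∉ S)
    (hhoriz : ∀ a : ℕ, 1 ≤ a → (a, 0) ∈ S)
    (hslope : ∀ a b : ℕ, (a, b) ∈ S → 0 < b → a ≤ 2 * b)
    (P T E F : PowerSeries ℚ)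
    (hP : P = PowerSeries.mk fun n =>
      (Set.ncard {p : List (ℕ × ℕ) | IsPath S (2 * n) n p ∧
        HasBoundary (fun i => 2 * i + 1) p} : ℚ))
    (hT : T = PowerSeries.mk fun a => if 1 ≤ a ∧ (2 * a, a) ∈ S then 1 else 0)
    (hE : E = PowerSeries.mk fun n =>
      ∑ j ∈ Finset.range (2 * n + 1), (aCount S j n : ℚ))
    (hF : F = PowerSeries.mk fun n =>
      ∑ j ∈ Finset.range (2 * n), (aCount S j n : ℚ)) :
    P * (1 + (2 - T) * F) = E := by

  set Cg : PowerSeries ℚ := PowerSeries.mk fun n => ((Stmt19.Cset S n).ncard : ℚ) with hCg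
  set Dg : PowerSeries ℚ := PowerSeries.mk fun n => ((Stmt19.Dset S n).ncard : ℚ) with hDg
  set Gg : PowerSeries ℚ := PowerSeries.mk fun n => ((aCount S (2 * n) n : ℕ) : ℚ) with hGg
  have hPcoeff : ∀ n, (PowerSeries.coeff (R := ℚ) n) P = ((Stmt19.Pset S n).ncard : ℚ) := by
    intro n
    rw [hP, PowerSeries.coeff_mk]
    rfl
  have hFcoeff : ∀ k, (PowerSeries.coeff (R := ℚ) k) F = ((Stmt19.Fset S k).ncard : ℚ) := by
    intro k
    rw [hF, PowerSeries.coeff_mk, Stmt19.ncard_Fset h00]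
    push_cast
    rfl
  -- E = F + G
  have hE' : E = F + Gg := by
    ext n
    rw [hE, hF, map_add, PowerSeries.coeff_mk, PowerSeries.coeff_mk, hGg, PowerSeries.coeff_mk,
      Finset.sum_range_succ]
  -- G = P + C * F
  have hG : Gg = P + Cg * F := by
    ext n
    rw [map_add, hGg, PowerSeries.coeff_mk, PowerSeries.coeff_mul,
      Finset.Nat.sum_antidiagonal_eq_sum_range_succ_mk, hPcoeff]
    have hterm : ∀ i ∈ Finset.range (n + 1),
        (PowerSeries.coeff (R := ℚ) i) Cg * (PowerSeries.coeff (R := ℚ) (n - i)) F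
        = (((Stmt19.Cset S i).ncard * (Stmt19.Fset S (n - i)).ncard : ℕ) : ℚ) := by
      intro i _
      rw [hCg, PowerSeries.coeff_mk, hFcoeff]
      push_cast
      ring
    rw [Finset.sum_congr rfl hterm, Stmt19.ncard_Gset h00 hhoriz hslope n]
    push_cast
    ring
  -- P = 1 + D + T * P
  have hPD : P = 1 + Dg + T * P := by
    ext n
    rw [map_add, map_add, hPcoeff, PowerSeries.coeff_one, hDg, PowerSeries.coeff_mk,
      PowerSeries.coeff_mul, Finset.Nat.sum_antidiagonal_eq_sum_range_succ_mk]
    have hterm : ∀ a ∈ Finset.range (n + 1),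
        (PowerSeries.coeff (R := ℚ) a) T * (PowerSeries.coeff (R := ℚ) (n - a)) P
        = (((if 1 ≤ a ∧ (2 * a, a) ∈ S then 1 else 0) * (Stmt19.Pset S (n - a)).ncard : ℕ) : ℚ) := by
      intro a _
      rw [hT, PowerSeries.coeff_mk, hPcoeff]
      push_cast
      ring
    rw [Finset.sum_congr rfl hterm, Stmt19.ncard_Pset h00 hhoriz hslope n]
    push_cast
    by_cases hn : n = 0 <;> simp [hn]
  -- C = P + D
  have hCD : Cg = P + Dg := by
    ext n
    rw [map_add, hCg, PowerSeries.coeff_mk, hPcoeff, hDg, PowerSeries.coeff_mk,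
      Stmt19.ncard_Cset h00 n]
    push_cast
    ring
  -- assemble
  have h2 : 2 * P - T * P = Cg + 1 := by
    linear_combination hPD - hCD
  calc P * (1 + (2 - T) * F) = P + (2 * P - T * P) * F := by ring
    _ = P + (Cg + 1) * F := by rw [h2]
    _ = (P + Cg * F) + F := by ring
    _ = F + Gg := by rw [← hG]; ring
    _ = E := hE'.symm
end
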